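/- arXiv:1812.01759 — 3 statements merged into one kernel-verified Lean document; each statement's English description precedes it below -/
import Mathlib

section
/- The value function V_p is the predictable Snell envelope system of φ: it is the smallest predictable supermartingale system dominating φ. That is, if (V'(τ), τ ∈ T_0^p) is any admissible family satisfying V'(τ) ≥ φ(τ) a.s. for all predictable τ and E[V'(τ') | F_{τ⁻}] ≤ V'(τ) a.s. whenever τ ≤ τ' are predictable stopping times, then V_p(S) ≤ V'(S) a.s. for every predictable stopping time S. -/
open MeasureTheory Filter

variable {Ω : Type*} {m : MeasurableSpace Ω}

/-- A sequence of stopping times announcing the stopping time `τ`. -/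
def Announces (𝓕 : Filtration ℝ m) (τ : Ω → ℝ) (τs : ℕ → Ω → ℝ) : Prop :=
  (∀ n, IsStoppingTime 𝓕 (fun ω => ((τs n ω : ℝ) : WithTop ℝ))) ∧
  (∀ n ω, τs n ω ≤ τs (n + 1) ω) ∧
  (∀ n ω, τs n ω ≤ τ ω) ∧
  (∀ n ω, 0 < τ ω → τs n ω < τ ω) ∧
  (∀ ω, Tendsto (fun n => τs n ω) atTop (nhds (τ ω)))

/-- A predictable stopping time: a stopping time admitting an announcing sequence. -/
def IsPredST (𝓕 : Filtration ℝ m) (τ : Ω → ℝ) : Prop :=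
  IsStoppingTime 𝓕 (fun ω => ((τ ω : ℝ) : WithTop ℝ)) ∧ ∃ τs, Announces 𝓕 τ τs

/-- The σ-algebra `F_{τ⁻}`, generated by `F_0` and the sets `A ∩ {t < τ}`, `A ∈ F_t`. -/
def preMS (𝓕 : Filtration ℝ m) (τ : Ω → ℝ) : MeasurableSpace Ω :=
  𝓕 0 ⊔ MeasurableSpace.generateFrom
    {s | ∃ (t : ℝ) (A : Set Ω), MeasurableSet[𝓕 t] A ∧ s = A ∩ {ω | t < τ ω}}

/-- `T_0^p` : predictable stopping times with values in `[0, T]`. -/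
def T0 (𝓕 : Filtration ℝ m) (T : ℝ) : Set (Ω → ℝ) :=
  {τ | IsPredST 𝓕 τ ∧ ∀ ω, τ ω ∈ Set.Icc 0 T}

/-- `T_S^p` : predictable stopping times in `[0,T]` that dominate `S`. -/
def TS (𝓕 : Filtration ℝ m) (T : ℝ) (S : Ω → ℝ) : Set (Ω → ℝ) :=
  {τ ∈ T0 𝓕 T | ∀ ω, S ω ≤ τ ω}

/-- `T_{S⁺}^p` : predictable stopping times `τ` with `τ > S` on `{S < T}` and `τ = T` on `{S = T}`. -/
def TSplus (𝓕 : Filtration ℝ m) (T : ℝ) (S : Ω → ℝ) : Set (Ω → ℝ) :=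
  {τ ∈ T0 𝓕 T | (∀ ω, S ω < T → S ω < τ ω) ∧ (∀ ω, S ω = T → τ ω = T)}

/-- Predictable admissible reward family. -/
structure Admissible (𝓕 : Filtration ℝ m) (μ : Measure Ω) (T : ℝ)
    (φ : (Ω → ℝ) → Ω → ℝ) : Prop where
  nonneg : ∀ τ ∈ T0 𝓕 T, ∀ ω, 0 ≤ φ τ ω
  meas : ∀ τ ∈ T0 𝓕 T, Measurable[preMS 𝓕 τ] (φ τ)
  consistent : ∀ τ ∈ T0 𝓕 T, ∀ τ' ∈ T0 𝓕 T, ∀ᵐ ω ∂μ, τ ω = τ' ω → φ τ ω = φ τ' ω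

/-- `V` is (a version of) the essential supremum of the family `(g τ)_{τ ∈ 𝒯}`. -/
def IsEssSupFam (μ : Measure Ω) (g : (Ω → ℝ) → Ω → ℝ)
    (𝒯 : Set (Ω → ℝ)) (V : Ω → ℝ) : Prop :=
  (∀ τ ∈ 𝒯, g τ ≤ᵐ[μ] V) ∧ ∀ W : Ω → ℝ, (∀ τ ∈ 𝒯, g τ ≤ᵐ[μ] W) → V ≤ᵐ[μ] W

/-- `(V σ, S ≤ σ ≤ τ)` is a predictable martingale system on the stochastic interval `[S, τ]`. -/
def MartSysOn (𝓕 : Filtration ℝ m) (μ : Measure Ω) (T : ℝ)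
    (V : (Ω → ℝ) → Ω → ℝ) (S τ : Ω → ℝ) : Prop :=
  ∀ σ ∈ T0 𝓕 T, ∀ σ' ∈ T0 𝓕 T, (∀ ω, S ω ≤ σ ω) → (∀ ω, σ ω ≤ σ' ω) →
    (∀ ω, σ' ω ≤ τ ω) → μ[V σ'|preMS 𝓕 σ] =ᵐ[μ] V σ

theorem stmt7 (μ : Measure Ω) [IsProbabilityMeasure μ] (𝓕 : Filtration ℝ m) (T : ℝ)
    (φ : (Ω → ℝ) → Ω → ℝ) (hφ : Admissible 𝓕 μ T φ)
    (hφint : ∀ τ ∈ T0 𝓕 T, Integrable (φ τ) μ)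
    (V : (Ω → ℝ) → Ω → ℝ)
    (hV : ∀ S ∈ T0 𝓕 T,
      IsEssSupFam μ (fun τ => μ[φ τ|preMS 𝓕 S]) (TS 𝓕 T S) (V S))
    (V' : (Ω → ℝ) → Ω → ℝ) (hV'adm : Admissible 𝓕 μ T V')
    (hV'int : ∀ τ ∈ T0 𝓕 T, Integrable (V' τ) μ)
    (hdom : ∀ τ ∈ T0 𝓕 T, φ τ ≤ᵐ[μ] V' τ)
    (hsuper : ∀ τ ∈ T0 𝓕 T, ∀ τ' ∈ T0 𝓕 T, (∀ ω, τ ω ≤ τ' ω) →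
      μ[V' τ'|preMS 𝓕 τ] ≤ᵐ[μ] V' τ) :
    ∀ S ∈ T0 𝓕 T, V S ≤ᵐ[μ] V' S := by
  intro S hS
  refine (hV S hS).2 _ ?_
  intro τ hτ
  obtain ⟨hτ0, hSτ⟩ := hτ
  calc (fun ω => (μ[φ τ|preMS 𝓕 S]) ω)
      ≤ᵐ[μ] μ[V' τ|preMS 𝓕 S] :=
        condExp_mono (hφint τ hτ0) (hV'int τ hτ0) (hdom τ hτ0)
    _ ≤ᵐ[μ] V' S := hsuper S hS τ hτ0 hSτ
end

section
/- Assume the value family V_p is uniformly integrable and admits left limits: for each predictable stopping time S announced by a sequence (S_n) of predictable stopping times increasing to S with S_n < S on {S > 0}, the limit V_p(S⁻) := lim_n V_p(S_n) exists a.s. Then V_p(S) ≤ V_p(S⁻) almost surely. -/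
open MeasureTheory Filter

variable {Ω : Type*} {m : MeasurableSpace Ω}

lemma preMS_le_m (𝓕 : Filtration ℝ m) (τ : Ω → ℝ) (hτ : IsStoppingTime 𝓕 (fun ω => ((τ ω : ℝ) : WithTop ℝ))) :
    preMS 𝓕 τ ≤ m := by
  apply sup_le (𝓕.le 0)
  apply MeasurableSpace.generateFrom_le
  rintro s ⟨t, A, hA, rfl⟩
  refine MeasurableSet.inter (𝓕.le t _ hA) ?_
  have : {ω | t < τ ω} = {ω | ((τ ω : ℝ) : WithTop ℝ) ≤ t}ᶜ := by ext ω; simp [not_le]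
  rw [this]
  exact (𝓕.le t _ (hτ t)).compl

lemma preMS_mono (𝓕 : Filtration ℝ m) (σ τ : Ω → ℝ) (hσ : IsStoppingTime 𝓕 (fun ω => ((σ ω : ℝ) : WithTop ℝ)))
    (h : ∀ ω, σ ω ≤ τ ω) : preMS 𝓕 σ ≤ preMS 𝓕 τ := by
  apply sup_le le_sup_left
  apply MeasurableSpace.generateFrom_le
  rintro s ⟨t, A, hA, rfl⟩
  have hsub : {ω | t < σ ω} ⊆ {ω | t < τ ω} := fun ω hω => lt_of_lt_of_le hω (h ω)
  have : A ∩ {ω | t < σ ω} = (A ∩ {ω | t < σ ω}) ∩ {ω | t < τ ω} := by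
    rw [Set.inter_assoc, Set.inter_eq_self_of_subset_left hsub]
  rw [this]
  have hA' : MeasurableSet[𝓕 t] (A ∩ {ω | t < σ ω}) := by
    refine hA.inter ?_
    have : {ω | t < σ ω} = {ω | ((σ ω : ℝ) : WithTop ℝ) ≤ t}ᶜ := by ext ω; simp [not_le]
    rw [this]; exact (hσ t).compl
  exact le_sup_right (a := 𝓕 0) _
    (MeasurableSpace.measurableSet_generateFrom ⟨t, _, hA', rfl⟩)

lemma preMS_iSup (𝓕 : Filtration ℝ m) (S : Ω → ℝ) (Sn : ℕ → Ω → ℝ)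
    (hAnn : Announces 𝓕 S Sn) : (⨆ n, preMS 𝓕 (Sn n)) = preMS 𝓕 S := by
  obtain ⟨hst, hmono, hle, -, hten⟩ := hAnn
  apply le_antisymm
  · exact iSup_le fun n => preMS_mono 𝓕 (Sn n) S (hst n) (hle n)
  · apply sup_le
    · exact le_trans (le_sup_left (b := MeasurableSpace.generateFrom
        {s | ∃ (t : ℝ) (A : Set Ω), MeasurableSet[𝓕 t] A ∧ s = A ∩ {ω | t < Sn 0 ω}}))
        (le_iSup (fun n => preMS 𝓕 (Sn n)) 0)
    · apply MeasurableSpace.generateFrom_le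
      rintro s ⟨t, A, hA, rfl⟩
      have : A ∩ {ω | t < S ω} = ⋃ n, A ∩ {ω | t < Sn n ω} := by
        ext ω
        simp only [Set.mem_inter_iff, Set.mem_iUnion, Set.mem_setOf_eq]
        constructor
        · rintro ⟨hAω, ht⟩
          obtain ⟨n, hn⟩ := ((hten ω).eventually (eventually_gt_nhds ht)).exists
          exact ⟨n, hAω, hn⟩
        · rintro ⟨n, hAω, hn⟩
          exact ⟨hAω, lt_of_lt_of_le hn (hle n ω)⟩
      rw [this]
      refine MeasurableSet.iUnion fun n => ?_
      exact le_iSup (fun n => preMS 𝓕 (Sn n)) n _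
        (le_sup_right (a := 𝓕 0) _ (MeasurableSpace.measurableSet_generateFrom ⟨t, A, hA, rfl⟩))

theorem stmt11 (μ : Measure Ω) [IsProbabilityMeasure μ] (𝓕 : Filtration ℝ m) (T : ℝ)
    (φ : (Ω → ℝ) → Ω → ℝ) (hφ : Admissible 𝓕 μ T φ)
    (V : (Ω → ℝ) → Ω → ℝ)
    (hV : ∀ σ ∈ T0 𝓕 T,
      IsEssSupFam μ (fun θ => μ[φ θ|preMS 𝓕 σ]) (TS 𝓕 T σ) (V σ))
    (hVUI : UniformIntegrable (fun τ : T0 𝓕 T => V τ.1) 1 μ)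
    (S : Ω → ℝ) (hS : S ∈ T0 𝓕 T)
    (hAnn : ∃ Sn : ℕ → Ω → ℝ, (∀ n, Sn n ∈ T0 𝓕 T) ∧ Announces 𝓕 S Sn)
    (L : Ω → ℝ)
    (hL : ∀ Sn : ℕ → Ω → ℝ, (∀ n, Sn n ∈ T0 𝓕 T) → Announces 𝓕 S Sn →
      ∀ᵐ ω ∂μ, Tendsto (fun n => V (Sn n) ω) atTop (nhds (L ω))) :
    V S ≤ᵐ[μ] L := by
  
  obtain ⟨Sn, hSnT0, hAnnS⟩ := hAnn
  obtain ⟨hst, hmono, hle, hlt, hten⟩ := id hAnnS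
  set ℱ : Filtration ℕ m :=
    { seq := fun n => preMS 𝓕 (Sn n)
      mono' := monotone_nat_of_le_succ fun n => preMS_mono 𝓕 _ _ (hst n) (hmono n)
      le' := fun n => preMS_le_m 𝓕 _ (hst n) } with hℱ
  have hsup : (⨆ n, (ℱ n : MeasurableSpace Ω)) = preMS 𝓕 S := preMS_iSup 𝓕 S Sn hAnnS
  have hLlim := hL Sn hSnT0 hAnnS
  refine (hV S hS).2 L fun τ hτ => ?_
  have hbound : ∀ n, μ[φ τ|ℱ n] ≤ᵐ[μ] V (Sn n) := fun n =>
    (hV (Sn n) (hSnT0 n)).1 τ ⟨hτ.1, fun ω => le_trans (hle n ω) (hτ.2 ω)⟩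
  have hlevy := MeasureTheory.tendsto_ae_condExp (ℱ := ℱ) (μ := μ) (φ τ)
  rw [hsup] at hlevy
  filter_upwards [hlevy, hLlim, ae_all_iff.2 hbound] with ω h1 h2 h3
  exact le_of_tendsto_of_tendsto' h1 h2 h3
end

section
/- If the family (V_p(τ), τ ∈ T_[S,τ]^p) is a predictable martingale system for τ ∈ A_S^p, then A_S^p := {τ ∈ T_S^p : (V_p(σ), S ≤ σ ≤ τ) is a predictable martingale system} is stable under pairwise maximization: τ₁, τ₂ ∈ A_S^p implies τ₁ ∨ τ₂ ∈ A_S^p. -/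
open MeasureTheory Filter

variable {Ω : Type*} {m : MeasurableSpace Ω}

namespace Stmt16Aux

open MeasurableSpace

variable {𝓕 : Filtration ℝ m} {T : ℝ}

lemma st_max {τ1 τ2 : Ω → ℝ} (h1 : IsStoppingTime 𝓕 (fun ω => ((τ1 ω : ℝ) : WithTop ℝ)))
    (h2 : IsStoppingTime 𝓕 (fun ω => ((τ2 ω : ℝ) : WithTop ℝ))) :
    IsStoppingTime 𝓕 (fun ω => ((max (τ1 ω) (τ2 ω) : ℝ) : WithTop ℝ)) := by
  have := h1.max h2
  exact this

lemma st_min {τ1 τ2 : Ω → ℝ} (h1 : IsStoppingTime 𝓕 (fun ω => ((τ1 ω : ℝ) : WithTop ℝ)))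
    (h2 : IsStoppingTime 𝓕 (fun ω => ((τ2 ω : ℝ) : WithTop ℝ))) :
    IsStoppingTime 𝓕 (fun ω => ((min (τ1 ω) (τ2 ω) : ℝ) : WithTop ℝ)) := by
  have := h1.min h2
  exact this

lemma st_max_const {τ : Ω → ℝ} (h : IsStoppingTime 𝓕 (fun ω => ((τ ω : ℝ) : WithTop ℝ)))
    (c : ℝ) : IsStoppingTime 𝓕 (fun ω => ((max (τ ω) c : ℝ) : WithTop ℝ)) :=
  st_max (τ2 := fun _ => c) h (isStoppingTime_const 𝓕 c)

lemma st_meas {τ : Ω → ℝ} (h : IsStoppingTime 𝓕 (fun ω => ((τ ω : ℝ) : WithTop ℝ))) (t : ℝ) :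
    MeasurableSet[𝓕 t] {ω | τ ω ≤ t} := by
  simpa only [WithTop.coe_le_coe] using h t

lemma announces_max {τ1 τ2 : Ω → ℝ} {a b : ℕ → Ω → ℝ}
    (h1 : Announces 𝓕 τ1 a) (h2 : Announces 𝓕 τ2 b) :
    Announces 𝓕 (fun ω => max (τ1 ω) (τ2 ω)) (fun n ω => max (a n ω) (b n ω)) := by
  obtain ⟨h1st, h1mono, h1le, h1lt, h1t⟩ := h1
  obtain ⟨h2st, h2mono, h2le, h2lt, h2t⟩ := h2
  refine ⟨fun n => st_max (h1st n) (h2st n), fun n ω => max_le_max (h1mono n ω) (h2mono n ω),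
    fun n ω => max_le_max (h1le n ω) (h2le n ω), ?_, fun ω => (h1t ω).max (h2t ω)⟩
  intro n ω hpos
  show max (a n ω) (b n ω) < max (τ1 ω) (τ2 ω)
  have hpos' : 0 < max (τ1 ω) (τ2 ω) := hpos
  rcases le_or_gt (τ1 ω) 0 with hτ1 | hτ1
  · have hτ2 : 0 < τ2 ω := by
      rcases max_cases (τ1 ω) (τ2 ω) with ⟨he, _⟩ | ⟨he, _⟩
      · exact absurd (he ▸ hpos') (not_lt.2 hτ1)
      · exact he ▸ hpos'
    have hmax : max (τ1 ω) (τ2 ω) = τ2 ω := max_eq_right (hτ1.trans hτ2.le)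
    rw [hmax]
    exact max_lt (lt_of_le_of_lt (h1le n ω) (lt_of_le_of_lt hτ1 hτ2)) (h2lt n ω hτ2)
  · rcases le_or_gt (τ2 ω) 0 with hτ2 | hτ2
    · have hmax : max (τ1 ω) (τ2 ω) = τ1 ω := max_eq_left (hτ2.trans hτ1.le)
      rw [hmax]
      exact max_lt (h1lt n ω hτ1) (lt_of_le_of_lt (h2le n ω) (lt_of_le_of_lt hτ2 hτ1))
    · exact max_lt (lt_of_lt_of_le (h1lt n ω hτ1) (le_max_left _ _))
        (lt_of_lt_of_le (h2lt n ω hτ2) (le_max_right _ _))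

lemma announces_min {τ1 τ2 : Ω → ℝ} {a b : ℕ → Ω → ℝ}
    (h1 : Announces 𝓕 τ1 a) (h2 : Announces 𝓕 τ2 b) :
    Announces 𝓕 (fun ω => min (τ1 ω) (τ2 ω)) (fun n ω => min (a n ω) (b n ω)) := by
  obtain ⟨h1st, h1mono, h1le, h1lt, h1t⟩ := h1
  obtain ⟨h2st, h2mono, h2le, h2lt, h2t⟩ := h2
  refine ⟨fun n => st_min (h1st n) (h2st n), fun n ω => min_le_min (h1mono n ω) (h2mono n ω),
    fun n ω => min_le_min (h1le n ω) (h2le n ω), ?_, fun ω => (h1t ω).min (h2t ω)⟩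
  intro n ω hpos
  show min (a n ω) (b n ω) < min (τ1 ω) (τ2 ω)
  have hpos' : 0 < min (τ1 ω) (τ2 ω) := hpos
  have hτ1 : 0 < τ1 ω := lt_of_lt_of_le hpos' (min_le_left _ _)
  have hτ2 : 0 < τ2 ω := lt_of_lt_of_le hpos' (min_le_right _ _)
  exact lt_min ((min_le_left _ _).trans_lt (h1lt n ω hτ1))
    ((min_le_right _ _).trans_lt (h2lt n ω hτ2))

lemma T0_max {τ1 τ2 : Ω → ℝ} (h1 : τ1 ∈ T0 𝓕 T) (h2 : τ2 ∈ T0 𝓕 T) :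
    (fun ω => max (τ1 ω) (τ2 ω)) ∈ T0 𝓕 T := by
  obtain ⟨⟨hst1, a, ha⟩, hb1⟩ := h1
  obtain ⟨⟨hst2, b, hb⟩, hb2⟩ := h2
  exact ⟨⟨st_max hst1 hst2, _, announces_max ha hb⟩,
    fun ω => ⟨le_max_of_le_left (hb1 ω).1, max_le (hb1 ω).2 (hb2 ω).2⟩⟩

lemma T0_min {τ1 τ2 : Ω → ℝ} (h1 : τ1 ∈ T0 𝓕 T) (h2 : τ2 ∈ T0 𝓕 T) :
    (fun ω => min (τ1 ω) (τ2 ω)) ∈ T0 𝓕 T := by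
  obtain ⟨⟨hst1, a, ha⟩, hb1⟩ := h1
  obtain ⟨⟨hst2, b, hb⟩, hb2⟩ := h2
  exact ⟨⟨st_min hst1 hst2, _, announces_min ha hb⟩,
    fun ω => ⟨le_min (hb1 ω).1 (hb2 ω).1, min_le_of_left_le (hb1 ω).2⟩⟩

end Stmt16Aux
namespace Stmt16Aux

variable {𝓕 : Filtration ℝ m} {T : ℝ}

lemma measurableSet_preMS_gen {τ : Ω → ℝ} {t : ℝ} {A : Set Ω} (hA : MeasurableSet[𝓕 t] A) :
    MeasurableSet[preMS 𝓕 τ] (A ∩ {ω | t < τ ω}) :=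
  (le_sup_right : _ ≤ preMS 𝓕 τ) _ (MeasurableSpace.measurableSet_generateFrom ⟨t, A, hA, rfl⟩)

lemma measurableSet_F0_preMS {τ : Ω → ℝ} {A : Set Ω} (hA : MeasurableSet[𝓕 0] A) :
    MeasurableSet[preMS 𝓕 τ] A :=
  (le_sup_left : 𝓕 0 ≤ preMS 𝓕 τ) _ hA

lemma measurableSet_lt_preMS {τ : Ω → ℝ} (t : ℝ) :
    MeasurableSet[preMS 𝓕 τ] {ω | t < τ ω} := by
  have := measurableSet_preMS_gen (𝓕 := 𝓕) (τ := τ) (t := t) (A := Set.univ)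
    MeasurableSet.univ
  simpa using this

lemma preMS_le_m {τ : Ω → ℝ} (hτ : IsStoppingTime 𝓕 (fun ω => ((τ ω : ℝ) : WithTop ℝ))) : preMS 𝓕 τ ≤ m := by
  refine sup_le (𝓕.le 0) (MeasurableSpace.generateFrom_le ?_)
  rintro s ⟨t, A, hA, rfl⟩
  have h1 : {ω | t < τ ω} = {ω | τ ω ≤ t}ᶜ := by ext ω; simp [not_le]
  exact (𝓕.le t A hA).inter (h1 ▸ (𝓕.le t _ (st_meas hτ t)).compl)

lemma preMS_mono {τ τ' : Ω → ℝ} (hτ : IsStoppingTime 𝓕 (fun ω => ((τ ω : ℝ) : WithTop ℝ))) (hle : ∀ ω, τ ω ≤ τ' ω) :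
    preMS 𝓕 τ ≤ preMS 𝓕 τ' := by
  refine sup_le le_sup_left (MeasurableSpace.generateFrom_le ?_)
  rintro s ⟨t, A, hA, rfl⟩
  have hEq : A ∩ {ω | t < τ ω} =
      ⋃ q : {q : ℚ // t < (q : ℝ)}, ((A ∩ {ω | τ ω ≤ (q : ℝ)}ᶜ) ∩ {ω | (q : ℝ) < τ' ω}) := by
    ext ω
    simp only [Set.mem_inter_iff, Set.mem_iUnion, Set.mem_setOf_eq, Set.mem_compl_iff, not_le]
    constructor
    · rintro ⟨hAω, htω⟩
      obtain ⟨q, hq1, hq2⟩ := exists_rat_btwn htω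
      exact ⟨⟨q, hq1⟩, ⟨hAω, hq2⟩, lt_of_lt_of_le hq2 (hle ω)⟩
    · rintro ⟨q, ⟨hAω, hq⟩, -⟩
      exact ⟨hAω, lt_trans q.2 hq⟩
  rw [hEq]
  refine MeasurableSet.iUnion fun q => measurableSet_preMS_gen ?_
  exact (𝓕.mono (le_of_lt q.2) A hA).inter (st_meas hτ (q : ℝ)).compl

lemma stoppingTime_le_preMS {τ w : Ω → ℝ} (hτ0 : ∀ ω, 0 ≤ τ ω) (hw : IsStoppingTime 𝓕 (fun ω => ((w ω : ℝ) : WithTop ℝ)))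
    (hlt : ∀ ω, 0 < τ ω → w ω < τ ω) (h0 : ∀ ω, τ ω = 0 → w ω ≤ 0) :
    hw.measurableSpace ≤ preMS 𝓕 τ := by
  intro A hA
  rw [hw.measurableSet] at hA
  replace hA : ∀ t : ℝ, MeasurableSet[𝓕 t] (A ∩ {ω | w ω ≤ t}) := fun t => by
    simpa only [WithTop.coe_le_coe] using hA.2 t
  have hEq : A = ((A ∩ {ω | w ω ≤ 0}) ∩ {ω | (0 : ℝ) < τ ω}ᶜ) ∪
      ⋃ q : ℚ, ((A ∩ {ω | w ω ≤ (q : ℝ)}) ∩ {ω | (q : ℝ) < τ ω}) := by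
    ext ω
    simp only [Set.mem_union, Set.mem_inter_iff, Set.mem_setOf_eq, Set.mem_compl_iff,
      Set.mem_iUnion, not_lt]
    constructor
    · intro hAω
      rcases lt_or_eq_of_le (hτ0 ω) with hpos | hzero
      · obtain ⟨q, hq1, hq2⟩ := exists_rat_btwn (hlt ω hpos)
        exact Or.inr ⟨q, ⟨hAω, hq1.le⟩, hq2⟩
      · exact Or.inl ⟨⟨hAω, h0 ω hzero.symm⟩, le_of_eq hzero.symm⟩
    · rintro (⟨⟨hAω, -⟩, -⟩ | ⟨q, ⟨hAω, -⟩, -⟩) <;> exact hAω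
  rw [hEq]
  refine MeasurableSet.union (MeasurableSet.inter (measurableSet_F0_preMS (hA 0))
    (measurableSet_lt_preMS 0).compl) (MeasurableSet.iUnion fun q =>
      measurableSet_preMS_gen (hA (q : ℝ)))

lemma measurableSet_lt_min_preMS {η η' : Ω → ℝ}
    (hη : IsPredST 𝓕 η) (hη' : IsPredST 𝓕 η') (hη0 : ∀ ω, 0 ≤ η ω) (hη'0 : ∀ ω, 0 ≤ η' ω) :
    MeasurableSet[preMS 𝓕 (fun ω => min (η ω) (η' ω))] {ω | η' ω < η ω} := by
  obtain ⟨hηst, a, hast, hamono, hale, halt, hat⟩ := hη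
  obtain ⟨hη'st, b, hbst, hbmono, hble, hblt, hbt⟩ := hη'
  set a' : ℕ → Ω → ℝ := fun n ω => max (a n ω) 0 with ha'def
  set b' : ℕ → Ω → ℝ := fun n ω => max (b n ω) 0 with hb'def
  have ha'st : ∀ n, IsStoppingTime 𝓕 (fun ω => ((a' n ω : ℝ) : WithTop ℝ)) :=
    fun n => st_max_const (hast n) 0
  have hb'st : ∀ k, IsStoppingTime 𝓕 (fun ω => ((b' k ω : ℝ) : WithTop ℝ)) :=
    fun k => st_max_const (hbst k) 0
  have hb'le : ∀ k ω, b' k ω ≤ η' ω := fun k ω => max_le (hble k ω) (hη'0 ω)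
  have hEq : {ω | η' ω < η ω} = ⋃ n, ⋂ k, {ω | b' k ω < a' n ω} := by
    ext ω
    simp only [Set.mem_setOf_eq, Set.mem_iUnion, Set.mem_iInter]
    constructor
    · intro hlt'
      have hηpos : 0 < η ω := lt_of_le_of_lt (hη'0 ω) hlt'
      obtain ⟨n, hn⟩ := ((hat ω).eventually (eventually_gt_nhds hlt')).exists
      exact ⟨n, fun k => lt_of_le_of_lt (hb'le k ω) (lt_of_lt_of_le hn (le_max_left _ _))⟩
    · rintro ⟨n, hn⟩
      have hb'lim : Tendsto (fun k => b' k ω) atTop (nhds (η' ω)) := by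
        have := (hbt ω).max (tendsto_const_nhds (x := (0 : ℝ)))
        simpa [max_eq_left (hη'0 ω)] using this
      have hη'le : η' ω ≤ a' n ω :=
        le_of_tendsto hb'lim (Eventually.of_forall fun k => (hn k).le)
      rcases lt_or_eq_of_le (hη0 ω) with hηpos | hηzero
      · have : a' n ω < η ω := max_lt (halt n ω hηpos) hηpos
        exact lt_of_le_of_lt hη'le this
      · exfalso
        have ha0 : a' n ω ≤ 0 := by
          simp only [ha'def, max_le_iff]
          exact ⟨(hale n ω).trans (le_of_eq hηzero.symm), le_refl 0⟩
        exact absurd (lt_of_le_of_lt (le_max_right (b 0 ω) 0) (lt_of_lt_of_le (hn 0) ha0))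
          (lt_irrefl 0).elim
  rw [hEq]
  refine MeasurableSet.iUnion fun n => MeasurableSet.iInter fun k => ?_
  have hwst : IsStoppingTime 𝓕 (fun ω => ((min (a' n ω) (b' k ω) : ℝ) : WithTop ℝ)) :=
    st_min (ha'st n) (hb'st k)
  have hAw : MeasurableSet[hwst.measurableSpace] {ω | b' k ω < a' n ω} := by
    rw [hwst.measurableSet]
    have key : ∀ t : ℝ, MeasurableSet[𝓕 t]
        ({ω | b' k ω < a' n ω} ∩ {ω | min (a' n ω) (b' k ω) ≤ t}) := by
      intro t
      have hSetEq : {ω | b' k ω < a' n ω} ∩ {ω | min (a' n ω) (b' k ω) ≤ t} =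
          (⋃ q : {q : ℚ // (q : ℝ) ≤ t}, ({ω | b' k ω ≤ (q : ℝ)} ∩ {ω | a' n ω ≤ (q : ℝ)}ᶜ)) ∪
            ({ω | b' k ω ≤ t} ∩ {ω | a' n ω ≤ t}ᶜ) := by
        ext ω
        simp only [Set.mem_inter_iff, Set.mem_setOf_eq, Set.mem_union, Set.mem_iUnion,
          Set.mem_compl_iff, not_le]
        constructor
        · rintro ⟨hba, hmin⟩
          rw [min_le_iff] at hmin
          have hbt' : b' k ω ≤ t := by
            rcases hmin with h | h
            · exact (le_of_lt hba).trans h |>.trans (le_refl t) |>.trans (le_refl t) |> fun _ => le_trans hba.le h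
            · exact h
          rcases le_or_gt (a' n ω) t with hat' | hat'
          · obtain ⟨q, hq1, hq2⟩ := exists_rat_btwn hba
            exact Or.inl ⟨⟨q, hq2.le.trans hat'⟩, hq1.le, hq2⟩
          · exact Or.inr ⟨hbt', hat'⟩
        · rintro (⟨q, hq1, hq2⟩ | ⟨h1, h2⟩)
          · exact ⟨lt_of_le_of_lt hq1 hq2, min_le_of_right_le (hq1.trans q.2)⟩
          · exact ⟨lt_of_le_of_lt h1 h2, min_le_of_right_le h1⟩
      rw [hSetEq]
      refine MeasurableSet.union (MeasurableSet.iUnion fun q =>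
        ((𝓕.mono q.2 _ (st_meas (hb'st k) (q : ℝ))).inter (𝓕.mono q.2 _ (st_meas (ha'st n) (q : ℝ))).compl)) ?_
      exact (st_meas (hb'st k) t).inter (st_meas (ha'st n) t).compl
    refine ⟨?_, fun t => by simpa only [WithTop.coe_le_coe] using key t⟩
    have hU : {ω | b' k ω < a' n ω} = ⋃ N : ℕ,
        ({ω | b' k ω < a' n ω} ∩ {ω | min (a' n ω) (b' k ω) ≤ (N : ℝ)}) := by
      ext ω
      simp only [Set.mem_iUnion, Set.mem_inter_iff, Set.mem_setOf_eq]
      constructor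
      · intro h
        obtain ⟨N, hN⟩ := exists_nat_ge (min (a' n ω) (b' k ω))
        exact ⟨N, h, hN⟩
      · rintro ⟨_, h, _⟩
        exact h
    rw [hU]
    exact MeasurableSet.iUnion fun N => le_iSup (fun t => 𝓕 t) (N : ℝ) _ (key N)
  refine stoppingTime_le_preMS (fun ω => le_min (hη0 ω) (hη'0 ω)) hwst ?_ ?_ _ hAw
  · intro ω hpos
    have hηpos : 0 < η ω := lt_of_lt_of_le hpos (min_le_left _ _)
    have hη'pos : 0 < η' ω := lt_of_lt_of_le hpos (min_le_right _ _)
    exact lt_min ((min_le_left _ _).trans_lt (max_lt (halt n ω hηpos) hηpos))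
      ((min_le_right _ _).trans_lt (max_lt (hblt k ω hη'pos) hη'pos))
  · intro ω hzero
    rcases min_eq_iff.mp hzero with ⟨hη_eq, -⟩ | ⟨hη'_eq, -⟩
    · exact min_le_of_left_le (max_le ((hale n ω).trans hη_eq.le) (le_refl 0))
    · exact min_le_of_right_le (max_le ((hble k ω).trans hη'_eq.le) (le_refl 0))

end Stmt16Aux
namespace Stmt16Aux

variable {𝓕 : Filtration ℝ m} {T : ℝ}

lemma preMS_eq_generateFrom (τ : Ω → ℝ) : preMS 𝓕 τ = MeasurableSpace.generateFrom
    ({s | MeasurableSet[𝓕 0] s} ∪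
      {s | ∃ (t : ℝ) (A : Set Ω), MeasurableSet[𝓕 t] A ∧ s = A ∩ {ω | t < τ ω}}) := by
  apply le_antisymm
  · refine sup_le (fun s hs => MeasurableSpace.measurableSet_generateFrom (Or.inl hs))
      (MeasurableSpace.generateFrom_le fun s hs =>
        MeasurableSpace.measurableSet_generateFrom (Or.inr hs))
  · refine MeasurableSpace.generateFrom_le fun s hs => ?_
    rcases hs with h | ⟨t, A, hA, hEq⟩
    · exact measurableSet_F0_preMS h
    · exact hEq ▸ measurableSet_preMS_gen hA

lemma trace_exists {η η' : Ω → ℝ} {A : Set Ω} (hA : ∀ ω ∈ A, η ω = η' ω) :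
    ∀ C : Set Ω, MeasurableSet[preMS 𝓕 η] C →
      ∃ D, MeasurableSet[preMS 𝓕 η'] D ∧ C ∩ A = D ∩ A := by
  intro C hC
  rw [preMS_eq_generateFrom] at hC
  refine MeasurableSpace.generateFrom_induction
    (p := fun s _ => ∃ D, MeasurableSet[preMS 𝓕 η'] D ∧ s ∩ A = D ∩ A) _ ?_ ?_ ?_ ?_ C hC
  · rintro t (ht | ⟨u, B, hB, rfl⟩) _
    · exact ⟨t, measurableSet_F0_preMS ht, rfl⟩
    · refine ⟨B ∩ {ω | u < η' ω}, measurableSet_preMS_gen hB, ?_⟩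
      ext ω
      simp only [Set.mem_inter_iff, Set.mem_setOf_eq, and_assoc]
      exact ⟨fun ⟨h1, h2, h3⟩ => ⟨h1, hA ω h3 ▸ h2, h3⟩, fun ⟨h1, h2, h3⟩ => ⟨h1, (hA ω h3).symm ▸ h2, h3⟩⟩
  · exact ⟨∅, @MeasurableSet.empty Ω (preMS 𝓕 η'), rfl⟩
  · rintro t _ ⟨D, hD, hEq⟩
    refine ⟨Dᶜ, hD.compl, ?_⟩
    ext ω
    simp only [Set.mem_inter_iff, Set.mem_compl_iff]
    constructor
    · rintro ⟨ht, hAω⟩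
      exact ⟨fun hDω => ht (by have := hEq ▸ (Set.mem_inter hDω hAω); exact this.1), hAω⟩
    · rintro ⟨hD', hAω⟩
      exact ⟨fun ht => hD' (by have := hEq ▸ (Set.mem_inter ht hAω); exact this.1), hAω⟩
  · rintro f hf hp
    choose D hD hEq using hp
    refine ⟨⋃ n, D n, MeasurableSet.iUnion hD, ?_⟩
    rw [Set.iUnion_inter, Set.iUnion_inter]
    exact Set.iUnion_congr hEq

lemma measurableSet_trace_transfer {η η' : Ω → ℝ} {A C : Set Ω}
    (hA : ∀ ω ∈ A, η ω = η' ω) (hAη' : MeasurableSet[preMS 𝓕 η'] A)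
    (hC : MeasurableSet[preMS 𝓕 η] C) (hCA : C ⊆ A) :
    MeasurableSet[preMS 𝓕 η'] C := by
  obtain ⟨D, hD, hEq⟩ := trace_exists hA C hC
  have h2 : C = D ∩ A := by rw [← hEq, Set.inter_eq_left.2 hCA]
  rw [h2]; exact hD.inter hAη'

lemma measurable_indicator_trace {G H : MeasurableSpace Ω} {A : Set Ω} {f : Ω → ℝ}
    (hAH : MeasurableSet[H] A)
    (tr : ∀ C, MeasurableSet[G] C → ∃ D, MeasurableSet[H] D ∧ C ∩ A = D ∩ A)
    (hf : Measurable[G] f) : Measurable[H] (A.indicator f) := by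
  intro s hs
  obtain ⟨D, hD, hEq⟩ := tr (f ⁻¹' s) (hf hs)
  by_cases h0 : (0 : ℝ) ∈ s
  · have hPre : A.indicator f ⁻¹' s = (D ∩ A) ∪ Aᶜ := by
      rw [← hEq]; ext ω
      by_cases hω : ω ∈ A <;>
        simp [Set.indicator_of_mem, Set.indicator_of_notMem, hω, h0]
    rw [hPre]; exact (hD.inter hAH).union hAH.compl
  · have hPre : A.indicator f ⁻¹' s = D ∩ A := by
      rw [← hEq]; ext ω
      by_cases hω : ω ∈ A <;>
        simp [Set.indicator_of_mem, Set.indicator_of_notMem, hω, h0]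
    rw [hPre]; exact hD.inter hAH

lemma condexp_trace {μ : Measure Ω} [IsProbabilityMeasure μ] {G H : MeasurableSpace Ω}
    (hG : G ≤ m) (hH : H ≤ m) {A : Set Ω} (hAG : MeasurableSet[G] A) (hAH : MeasurableSet[H] A)
    (trGH : ∀ C, MeasurableSet[G] C → ∃ D, MeasurableSet[H] D ∧ C ∩ A = D ∩ A)
    (trHG : ∀ C, MeasurableSet[H] C → ∃ D, MeasurableSet[G] D ∧ C ∩ A = D ∩ A)
    {X : Ω → ℝ} (hX : Integrable X μ) :
    A.indicator (μ[X|G]) =ᵐ[μ] A.indicator (μ[X|H]) := by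
  letI _minst : MeasurableSpace Ω := m
  have hAm : MeasurableSet[m] A := hG _ hAG
  have hright : A.indicator (μ[X|H]) =ᵐ[μ] μ[A.indicator X|H] :=
    (condExp_indicator (m := H) hX hAH).symm
  have hCEG : Integrable (μ[X|G]) μ := integrable_condExp
  have hleft : A.indicator (μ[X|G]) =ᵐ[μ] μ[A.indicator X|H] := by
    refine ae_eq_condExp_of_forall_setIntegral_eq hH (hX.indicator hAm)
      (fun s _ _ => (hCEG.indicator hAm).integrableOn) ?_ ?_
    · intro s hs _
      have h1 := setIntegral_indicator (f := μ[X|G]) (s := s) (μ := μ) hAm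
      have h2 := setIntegral_indicator (f := X) (s := s) (μ := μ) hAm
      obtain ⟨D, hD, hEq⟩ := trHG s hs
      have hsA : MeasurableSet[G] (s ∩ A) := hEq ▸ hD.inter hAG
      have h3 := setIntegral_condExp (μ := μ) hG hX hsA
      rw [h1, h2, h3]
    · have hmeasW : Measurable[H] (A.indicator (μ[X|G])) :=
        measurable_indicator_trace hAH trGH (stronglyMeasurable_condExp (m := G)).measurable
      exact ⟨A.indicator (μ[X|G]), hmeasW.stronglyMeasurable, EventuallyEq.rfl⟩
  exact hleft.trans hright.symm

end Stmt16Aux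
namespace Stmt16Aux

variable {𝓕 : Filtration ℝ m} {T : ℝ} {μ : Measure Ω}

lemma integrable_phi [IsProbabilityMeasure μ] {φ : (Ω → ℝ) → Ω → ℝ}
    (hφUI : UniformIntegrable (fun τ : T0 𝓕 T => φ τ.1) 1 μ) {θ : Ω → ℝ} (hθ : θ ∈ T0 𝓕 T) :
    Integrable (φ θ) μ := by
  obtain ⟨hmeas, -, C, hC⟩ := hφUI
  exact memLp_one_iff_integrable.mp
    ⟨hmeas ⟨θ, hθ⟩, lt_of_le_of_lt (hC ⟨θ, hθ⟩) ENNReal.coe_lt_top⟩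

lemma indicator_congr_ae {s : Set Ω} {f g : Ω → ℝ} (h : f =ᵐ[μ] g) :
    s.indicator f =ᵐ[μ] s.indicator g := by
  filter_upwards [h] with ω hω
  by_cases hmem : ω ∈ s
  · simp [Set.indicator_of_mem hmem, hω]
  · simp [Set.indicator_of_notMem hmem]

lemma ae_eq_of_indicator_compl {s : Set Ω} {f g : Ω → ℝ}
    (h1 : s.indicator f =ᵐ[μ] s.indicator g)
    (h2 : sᶜ.indicator f =ᵐ[μ] sᶜ.indicator g) : f =ᵐ[μ] g := by
  filter_upwards [h1, h2] with ω e1 e2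
  by_cases hω : ω ∈ s
  · simpa [Set.indicator_of_mem hω] using e1
  · have hωc : ω ∈ sᶜ := hω
    simpa [Set.indicator_of_mem hωc] using e2

/-- Localization of the value family: on a set where two predictable times agree, and which
is measurable for both pre-σ-algebras, the values agree a.e. -/
lemma V_loc [IsProbabilityMeasure μ] {φ V : (Ω → ℝ) → Ω → ℝ}
    (hφc : ∀ τ ∈ T0 𝓕 T, ∀ τ' ∈ T0 𝓕 T, ∀ᵐ ω ∂μ, τ ω = τ' ω → φ τ ω = φ τ' ω)
    (hφInt : ∀ θ ∈ T0 𝓕 T, Integrable (φ θ) μ)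
    (hV : ∀ σ ∈ T0 𝓕 T, IsEssSupFam μ (fun θ => μ[φ θ|preMS 𝓕 σ]) (TS 𝓕 T σ) (V σ))
    {η η' : Ω → ℝ} (hη : η ∈ T0 𝓕 T) (hη' : η' ∈ T0 𝓕 T) {A : Set Ω}
    (hAsub : ∀ ω ∈ A, η ω = η' ω) (hAη : MeasurableSet[preMS 𝓕 η] A)
    (hAη' : MeasurableSet[preMS 𝓕 η'] A) :
    A.indicator (V η) =ᵐ[μ] A.indicator (V η') := by
  classical
  letI _minst : MeasurableSpace Ω := m
  have hAsub' : ∀ ω ∈ A, η' ω = η ω := fun ω h => (hAsub ω h).symm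
  -- one-sided bound
  have main : ∀ (ζ ζ' : Ω → ℝ), ζ ∈ T0 𝓕 T → ζ' ∈ T0 𝓕 T → (∀ ω ∈ A, ζ ω = ζ' ω) →
      MeasurableSet[preMS 𝓕 ζ] A → MeasurableSet[preMS 𝓕 ζ'] A →
      ∀ᵐ ω ∂μ, ω ∈ A → V ζ ω ≤ V ζ' ω := by
    intro ζ ζ' hζ hζ' hsub hAζ hAζ'
    have hsub' : ∀ ω ∈ A, ζ' ω = ζ ω := fun ω h => (hsub ω h).symm
    set W : Ω → ℝ := fun ω => if ω ∈ A then V ζ' ω else V ζ ω with hW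
    have hbound : ∀ θ ∈ TS 𝓕 T ζ, (fun θ => μ[φ θ|preMS 𝓕 ζ]) θ ≤ᵐ[μ] W := by
      intro θ hθ
      have hθT0 : θ ∈ T0 𝓕 T := hθ.1
      have hθge : ∀ ω, ζ ω ≤ θ ω := hθ.2
      set θ' : Ω → ℝ := fun ω => max (θ ω) (ζ' ω) with hθ'def
      have hθ'T0 : θ' ∈ T0 𝓕 T := T0_max hθT0 hζ'
      have hθ'TS : θ' ∈ TS 𝓕 T ζ' := ⟨hθ'T0, fun ω => le_max_right _ _⟩
      have e1 : A.indicator (μ[φ θ|preMS 𝓕 ζ]) =ᵐ[μ] μ[A.indicator (φ θ)|preMS 𝓕 ζ] :=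
        (condExp_indicator (hφInt θ hθT0) hAζ).symm
      have econs : A.indicator (φ θ) =ᵐ[μ] A.indicator (φ θ') := by
        filter_upwards [hφc θ hθT0 θ' hθ'T0] with ω hcons
        by_cases hω : ω ∈ A
        · have hEqθ : θ ω = θ' ω := by
            have h1 : ζ' ω = ζ ω := hsub' ω hω
            have h2 : ζ' ω ≤ θ ω := h1 ▸ hθge ω
            simp only [hθ'def]
            exact (max_eq_left h2).symm
          simp only [Set.indicator_of_mem hω]
          exact hcons hEqθ
        · simp [Set.indicator_of_notMem hω]
      have e2 : μ[A.indicator (φ θ)|preMS 𝓕 ζ] =ᵐ[μ] μ[A.indicator (φ θ')|preMS 𝓕 ζ] :=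
        condExp_congr_ae econs
      have e3 : μ[A.indicator (φ θ')|preMS 𝓕 ζ] =ᵐ[μ] A.indicator (μ[φ θ'|preMS 𝓕 ζ]) :=
        condExp_indicator (hφInt θ' hθ'T0) hAζ
      have e4 : A.indicator (μ[φ θ'|preMS 𝓕 ζ]) =ᵐ[μ] A.indicator (μ[φ θ'|preMS 𝓕 ζ']) :=
        condexp_trace (preMS_le_m hζ.1.1) (preMS_le_m hζ'.1.1) hAζ hAζ'
          (trace_exists hsub) (trace_exists hsub') (hφInt θ' hθ'T0)
      have e5 : μ[φ θ'|preMS 𝓕 ζ'] ≤ᵐ[μ] V ζ' := (hV ζ' hζ').1 θ' hθ'TS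
      have e6 : μ[φ θ|preMS 𝓕 ζ] ≤ᵐ[μ] V ζ := (hV ζ hζ).1 θ hθ
      filter_upwards [e1, e2, e3, e4, e5, e6] with ω h1 h2 h3 h4 h5 h6
      by_cases hω : ω ∈ A
      · have hchain : A.indicator (μ[φ θ|preMS 𝓕 ζ]) ω = A.indicator (μ[φ θ'|preMS 𝓕 ζ']) ω :=
          h1.trans (h2.trans (h3.trans h4))
        rw [Set.indicator_of_mem hω, Set.indicator_of_mem hω] at hchain
        simp only [hW, if_pos hω]
        exact hchain ▸ h5
      · simp only [hW, if_neg hω]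
        exact h6
    have hle := (hV ζ hζ).2 W hbound
    filter_upwards [hle] with ω hω hmem
    simpa [hW, if_pos hmem] using hω
  have h12 := main η η' hη hη' hAsub hAη hAη'
  have h21 := main η' η hη' hη hAsub' hAη' hAη
  filter_upwards [h12, h21] with ω e1 e2
  by_cases hω : ω ∈ A
  · rw [Set.indicator_of_mem hω, Set.indicator_of_mem hω]
    exact le_antisymm (e1 hω) (e2 hω)
  · rw [Set.indicator_of_notMem hω, Set.indicator_of_notMem hω]

end Stmt16Aux
namespace Stmt16Aux

variable {𝓕 : Filtration ℝ m} {T : ℝ} {μ : Measure Ω}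

lemma V_int_of_mart {V : (Ω → ℝ) → Ω → ℝ} {S τ η : Ω → ℝ}
    (hMart : MartSysOn 𝓕 μ T V S τ) (hη : η ∈ T0 𝓕 T)
    (hSη : ∀ ω, S ω ≤ η ω) (hητ : ∀ ω, η ω ≤ τ ω) :
    V η =ᵐ[μ] μ[V η|preMS 𝓕 η] ∧ Integrable (V η) μ := by
  have h := hMart η hη η hη hSη (fun ω => le_refl _) hητ
  exact ⟨h.symm, integrable_condExp.congr h⟩

/-- Martingale property of the stopped value system, conditioning at `ρ⁻` rather than
`(ρ ∧ τ)⁻`. -/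
lemma martSys_stopped [IsProbabilityMeasure μ] {φ V : (Ω → ℝ) → Ω → ℝ} {S τ : Ω → ℝ}
    (hφc : ∀ τ ∈ T0 𝓕 T, ∀ τ' ∈ T0 𝓕 T, ∀ᵐ ω ∂μ, τ ω = τ' ω → φ τ ω = φ τ' ω)
    (hφInt : ∀ θ ∈ T0 𝓕 T, Integrable (φ θ) μ)
    (hV : ∀ σ ∈ T0 𝓕 T, IsEssSupFam μ (fun θ => μ[φ θ|preMS 𝓕 σ]) (TS 𝓕 T σ) (V σ))
    (hτ : τ ∈ T0 𝓕 T) (hSτ : ∀ ω, S ω ≤ τ ω)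
    (hMart : MartSysOn 𝓕 μ T V S τ)
    {ρ ρ' : Ω → ℝ} (hρ : ρ ∈ T0 𝓕 T) (hρ' : ρ' ∈ T0 𝓕 T)
    (hSρ : ∀ ω, S ω ≤ ρ ω) (hρρ' : ∀ ω, ρ ω ≤ ρ' ω) :
    μ[V (fun ω => min (ρ' ω) (τ ω))|preMS 𝓕 ρ] =ᵐ[μ]
      V (fun ω => min (ρ ω) (τ ω)) := by
  classical
  letI _minst : MeasurableSpace Ω := m
  set ρτ : Ω → ℝ := fun ω => min (ρ ω) (τ ω) with hρτdef
  set ρ'τ : Ω → ℝ := fun ω => min (ρ' ω) (τ ω) with hρ'τdef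
  have hρτ0 : ρτ ∈ T0 𝓕 T := T0_min hρ hτ
  have hρ'τ0 : ρ'τ ∈ T0 𝓕 T := T0_min hρ' hτ
  have hρ0 : ∀ ω, 0 ≤ ρ ω := fun ω => (hρ.2 ω).1
  have hτ0 : ∀ ω, 0 ≤ τ ω := fun ω => (hτ.2 ω).1
  set Ac : Set Ω := {ω | τ ω < ρ ω} with hAcdef
  have hAcρτ : MeasurableSet[preMS 𝓕 ρτ] Ac := measurableSet_lt_min_preMS hρ.1 hτ.1 hρ0 hτ0
  have hstρτ : IsStoppingTime 𝓕 (fun ω => ((ρτ ω : ℝ) : WithTop ℝ)) := hρτ0.1.1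
  have hAcρ : MeasurableSet[preMS 𝓕 ρ] Ac :=
    preMS_mono hstρτ (fun ω => min_le_left _ _) _ hAcρτ
  have hAcρ'τ : MeasurableSet[preMS 𝓕 ρ'τ] Ac :=
    preMS_mono hstρτ (fun ω => min_le_min (hρρ' ω) (le_refl _)) _ hAcρτ
  have hAcτ : MeasurableSet[preMS 𝓕 τ] Ac :=
    preMS_mono hstρτ (fun ω => min_le_right _ _) _ hAcρτ
  have hSρτ : ∀ ω, S ω ≤ ρτ ω := fun ω => le_min (hSρ ω) (hSτ ω)
  have hSρ'τ : ∀ ω, S ω ≤ ρ'τ ω := fun ω => le_min ((hSρ ω).trans (hρρ' ω)) (hSτ ω)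
  obtain ⟨-, hXint⟩ := V_int_of_mart hMart hρ'τ0 hSρ'τ (fun ω => min_le_right _ _)
  -- Part 1: on Acᶜ = {ρ ≤ τ}
  have hmemAc : ∀ ω, ω ∈ Acᶜ → ρ ω ≤ τ ω := by
    intro ω hω
    have : ¬ τ ω < ρ ω := hω
    exact not_lt.mp this
  have hsubA : ∀ ω ∈ Acᶜ, ρ ω = ρτ ω := fun ω hω => (min_eq_left (hmemAc ω hω)).symm
  have hsubA' : ∀ ω ∈ Acᶜ, ρτ ω = ρ ω := fun ω hω => min_eq_left (hmemAc ω hω)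
  have keyA : Acᶜ.indicator (μ[V ρ'τ|preMS 𝓕 ρ]) =ᵐ[μ] Acᶜ.indicator (V ρτ) := by
    have t2 : Acᶜ.indicator (μ[V ρ'τ|preMS 𝓕 ρ]) =ᵐ[μ]
        Acᶜ.indicator (μ[V ρ'τ|preMS 𝓕 ρτ]) :=
      condexp_trace (preMS_le_m hρ.1.1) (preMS_le_m hstρτ) hAcρ.compl hAcρτ.compl
        (trace_exists hsubA) (trace_exists hsubA') hXint
    have hm := hMart ρτ hρτ0 ρ'τ hρ'τ0 hSρτ
      (fun ω => min_le_min (hρρ' ω) (le_refl _)) (fun ω => min_le_right _ _)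
    exact t2.trans (indicator_congr_ae hm)
  -- Part 2: on Ac = {τ < ρ}
  have hsubc : ∀ ω ∈ Ac, ρ'τ ω = τ ω :=
    fun ω hω => min_eq_right ((le_of_lt hω).trans (hρρ' ω))
  have hlocX : Ac.indicator (V ρ'τ) =ᵐ[μ] Ac.indicator (V τ) :=
    V_loc hφc hφInt hV hρ'τ0 hτ hsubc hAcρ'τ hAcτ
  obtain ⟨hVτg, hVτint⟩ := V_int_of_mart hMart hτ hSτ (fun ω => le_refl _)
  set gτ : Ω → ℝ := μ[V τ|preMS 𝓕 τ] with hgτdef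
  have hsubcτ : ∀ ω ∈ Ac, τ ω = ρτ ω := fun ω hω => (min_eq_right (le_of_lt hω)).symm
  have hgmeas : Measurable[preMS 𝓕 ρτ] (Ac.indicator gτ) :=
    measurable_indicator_trace hAcρτ (trace_exists hsubcτ)
      (stronglyMeasurable_condExp (m := preMS 𝓕 τ)).measurable
  have hgmeasρ : Measurable[preMS 𝓕 ρ] (Ac.indicator gτ) :=
    hgmeas.mono (preMS_mono hstρτ (fun ω => min_le_left _ _)) le_rfl
  have hgint : Integrable (Ac.indicator gτ) μ :=
    integrable_condExp.indicator (preMS_le_m hρ.1.1 _ hAcρ)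
  have keyC : Ac.indicator (μ[V ρ'τ|preMS 𝓕 ρ]) =ᵐ[μ] Ac.indicator (V ρτ) := by
    have s1 : Ac.indicator (μ[V ρ'τ|preMS 𝓕 ρ]) =ᵐ[μ] μ[Ac.indicator (V ρ'τ)|preMS 𝓕 ρ] :=
      (condExp_indicator hXint hAcρ).symm
    have s2 : μ[Ac.indicator (V ρ'τ)|preMS 𝓕 ρ] =ᵐ[μ] μ[Ac.indicator gτ|preMS 𝓕 ρ] :=
      condExp_congr_ae (hlocX.trans (indicator_congr_ae hVτg))
    have s3 : μ[Ac.indicator gτ|preMS 𝓕 ρ] = Ac.indicator gτ :=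
      condExp_of_stronglyMeasurable (preMS_le_m hρ.1.1) hgmeasρ.stronglyMeasurable hgint
    have s4 : Ac.indicator gτ =ᵐ[μ] Ac.indicator (V τ) := indicator_congr_ae hVτg.symm
    have s5 : Ac.indicator (V τ) =ᵐ[μ] Ac.indicator (V ρτ) :=
      V_loc hφc hφInt hV hτ hρτ0 hsubcτ hAcτ hAcρτ
    have s3' : μ[Ac.indicator gτ|preMS 𝓕 ρ] =ᵐ[μ] Ac.indicator (V ρτ) := by
      rw [s3]; exact s4.trans s5
    exact (s1.trans s2).trans s3'
  exact ae_eq_of_indicator_compl keyC keyA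

end Stmt16Aux
namespace Stmt16Aux

variable {𝓕 : Filtration ℝ m} {T : ℝ} {μ : Measure Ω}

lemma indicator_compl_add (s : Set Ω) (f : Ω → ℝ) :
    (fun ω => s.indicator f ω + sᶜ.indicator f ω) = f := by
  funext ω
  by_cases hω : ω ∈ s <;> simp [Set.indicator_apply, hω]

lemma indicator_triple {R1 R2 R3 : Set Ω} (f : Ω → ℝ)
    (hcover : ∀ ω, (ω ∈ R1 ∧ ω ∉ R2 ∧ ω ∉ R3) ∨ (ω ∈ R2 ∧ ω ∉ R1 ∧ ω ∉ R3) ∨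
      (ω ∈ R3 ∧ ω ∉ R1 ∧ ω ∉ R2)) :
    (fun ω => R1.indicator f ω + R2.indicator f ω + R3.indicator f ω) = f := by
  funext ω
  rcases hcover ω with ⟨h1, h2, h3⟩ | ⟨h1, h2, h3⟩ | ⟨h1, h2, h3⟩ <;>
    simp [Set.indicator_of_mem, Set.indicator_of_notMem, h1, h2, h3]

/-- `(†)` : for any predictable `ρ` with `S ≤ ρ ≤ τ1 ∨ τ2`,
`E[V (τ1 ∨ τ2) | F_{ρ⁻}] = V ρ` a.e. -/
lemma V_dagger [IsProbabilityMeasure μ] {φ V : (Ω → ℝ) → Ω → ℝ} {S τ1 τ2 : Ω → ℝ}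
    (hφc : ∀ τ ∈ T0 𝓕 T, ∀ τ' ∈ T0 𝓕 T, ∀ᵐ ω ∂μ, τ ω = τ' ω → φ τ ω = φ τ' ω)
    (hφInt : ∀ θ ∈ T0 𝓕 T, Integrable (φ θ) μ)
    (hV : ∀ σ ∈ T0 𝓕 T, IsEssSupFam μ (fun θ => μ[φ θ|preMS 𝓕 σ]) (TS 𝓕 T σ) (V σ))
    (hτ1 : τ1 ∈ T0 𝓕 T) (hSτ1 : ∀ ω, S ω ≤ τ1 ω) (hM1 : MartSysOn 𝓕 μ T V S τ1)
    (hτ2 : τ2 ∈ T0 𝓕 T) (hSτ2 : ∀ ω, S ω ≤ τ2 ω) (hM2 : MartSysOn 𝓕 μ T V S τ2)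
    {ρ : Ω → ℝ} (hρ : ρ ∈ T0 𝓕 T) (hSρ : ∀ ω, S ω ≤ ρ ω)
    (hρmax : ∀ ω, ρ ω ≤ max (τ1 ω) (τ2 ω)) :
    μ[V (fun ω => max (τ1 ω) (τ2 ω))|preMS 𝓕 ρ] =ᵐ[μ] V ρ := by
  classical
  letI _minst : MeasurableSpace Ω := m
  -- notation
  set θm : Ω → ℝ := fun ω => max (τ1 ω) (τ2 ω) with hθmdef
  set τ12 : Ω → ℝ := fun ω => min (τ1 ω) (τ2 ω) with hτ12def
  set ζ : Ω → ℝ := fun ω => max (ρ ω) (τ12 ω) with hζdef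
  have hθm0 : θm ∈ T0 𝓕 T := T0_max hτ1 hτ2
  have hτ120 : τ12 ∈ T0 𝓕 T := T0_min hτ1 hτ2
  have hζ0 : ζ ∈ T0 𝓕 T := T0_max hρ hτ120
  have hM12 : MartSysOn 𝓕 μ T V S τ12 := fun α hα β hβ hSα hαβ hβτ =>
    hM1 α hα β hβ hSα hαβ (fun ω => (hβτ ω).trans (min_le_left _ _))
  have hSτ12 : ∀ ω, S ω ≤ τ12 ω := fun ω => le_min (hSτ1 ω) (hSτ2 ω)
  have hSζ : ∀ ω, S ω ≤ ζ ω := fun ω => (hSρ ω).trans (le_max_left _ _)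
  have hρζ : ∀ ω, ρ ω ≤ ζ ω := fun ω => le_max_left _ _
  have hτ12ζ : ∀ ω, τ12 ω ≤ ζ ω := fun ω => le_max_right _ _
  -- nonnegativity
  have pos : ∀ {η : Ω → ℝ}, η ∈ T0 𝓕 T → ∀ ω, 0 ≤ η ω := fun hη ω => (hη.2 ω).1
  -- stopping times
  have stρ : IsStoppingTime 𝓕 (fun ω => ((ρ ω : ℝ) : WithTop ℝ)) := hρ.1.1
  have stτ12 : IsStoppingTime 𝓕 (fun ω => ((τ12 ω : ℝ) : WithTop ℝ)) := hτ120.1.1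
  have stζ : IsStoppingTime 𝓕 (fun ω => ((ζ ω : ℝ) : WithTop ℝ)) := hζ0.1.1
  -- basic σ-algebra inclusions
  have hle_ρ_ζ : preMS 𝓕 ρ ≤ preMS 𝓕 ζ := preMS_mono stρ hρζ
  -- integrability of stopped values
  obtain ⟨hVτ1g, hVτ1int⟩ := V_int_of_mart hM1 hτ1 hSτ1 (fun ω => le_refl _)
  obtain ⟨hVτ2g, hVτ2int⟩ := V_int_of_mart hM2 hτ2 hSτ2 (fun ω => le_refl _)
  obtain ⟨hVτ12g, hVτ12int⟩ := V_int_of_mart hM12 hτ120 hSτ12 (fun ω => le_refl _)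
  ---------------------------------------------------------------------------
  -- Step (‡) : μ[V θm | preMS ζ] =ᵐ V ζ
  ---------------------------------------------------------------------------
  have ddagger : μ[V θm|preMS 𝓕 ζ] =ᵐ[μ] V ζ := by
    set s : Set Ω := {ω | τ2 ω < τ1 ω} with hsdef
    have hs12 : MeasurableSet[preMS 𝓕 τ12] s :=
      measurableSet_lt_min_preMS hτ1.1 hτ2.1 (pos hτ1) (pos hτ2)
    have hsθ : MeasurableSet[preMS 𝓕 θm] s :=
      preMS_mono stτ12 (fun ω => (min_le_left _ _).trans (le_max_left _ _)) _ hs12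
    have hsτ1 : MeasurableSet[preMS 𝓕 τ1] s :=
      preMS_mono stτ12 (fun ω => min_le_left _ _) _ hs12
    have hsτ2 : MeasurableSet[preMS 𝓕 τ2] s :=
      preMS_mono stτ12 (fun ω => min_le_right _ _) _ hs12
    have hsζ : MeasurableSet[preMS 𝓕 ζ] s := preMS_mono stτ12 hτ12ζ _ hs12
    have hsζτ1 : MeasurableSet[preMS 𝓕 (fun ω => min (ζ ω) (τ1 ω))] s :=
      preMS_mono stτ12 (fun ω => le_min (hτ12ζ ω) (min_le_left _ _)) _ hs12
    have hsζτ2 : MeasurableSet[preMS 𝓕 (fun ω => min (ζ ω) (τ2 ω))] s :=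
      preMS_mono stτ12 (fun ω => le_min (hτ12ζ ω) (min_le_right _ _)) _ hs12
    -- localizations of V θm
    have loc1 : s.indicator (V θm) =ᵐ[μ] s.indicator (V τ1) :=
      V_loc hφc hφInt hV hθm0 hτ1
        (fun ω hω => max_eq_left (le_of_lt hω)) hsθ hsτ1
    have loc2 : sᶜ.indicator (V θm) =ᵐ[μ] sᶜ.indicator (V τ2) :=
      V_loc hφc hφInt hV hθm0 hτ2
        (fun ω hω => max_eq_right (not_lt.mp hω)) hsθ.compl hsτ2.compl
    -- martingale transport from θm-time to ζ for τ1 and τ2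
    have hζτ1max : (fun ω => min (max (ζ ω) (τ1 ω)) (τ1 ω)) = τ1 :=
      funext fun ω => min_eq_right (le_max_right _ _)
    have hζτ2max : (fun ω => min (max (ζ ω) (τ2 ω)) (τ2 ω)) = τ2 :=
      funext fun ω => min_eq_right (le_max_right _ _)
    have m1 : μ[V τ1|preMS 𝓕 ζ] =ᵐ[μ] V (fun ω => min (ζ ω) (τ1 ω)) := by
      have := martSys_stopped hφc hφInt hV hτ1 hSτ1 hM1 hζ0 (T0_max hζ0 hτ1) hSζ
        (fun ω => le_max_left _ _)
      rwa [hζτ1max] at this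
    have m2 : μ[V τ2|preMS 𝓕 ζ] =ᵐ[μ] V (fun ω => min (ζ ω) (τ2 ω)) := by
      have := martSys_stopped hφc hφInt hV hτ2 hSτ2 hM2 hζ0 (T0_max hζ0 hτ2) hSζ
        (fun ω => le_max_left _ _)
      rwa [hζτ2max] at this
    -- localizations back to ζ
    have hζleτ1_on_s : ∀ ω ∈ s, min (ζ ω) (τ1 ω) = ζ ω := by
      intro ω hω
      have h1 : τ2 ω < τ1 ω := hω
      have h2 : ρ ω ≤ τ1 ω := (hρmax ω).trans (le_of_eq (max_eq_left (le_of_lt h1)))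
      have h3 : τ12 ω ≤ τ1 ω := min_le_left _ _
      exact min_eq_left (max_le h2 h3)
    have hζleτ2_on_sc : ∀ ω ∈ sᶜ, min (ζ ω) (τ2 ω) = ζ ω := by
      intro ω hω
      have h1 : τ1 ω ≤ τ2 ω := not_lt.mp hω
      have h2 : ρ ω ≤ τ2 ω := (hρmax ω).trans (le_of_eq (max_eq_right h1))
      exact min_eq_left (max_le h2 (min_le_right _ _))
    have locm1 : s.indicator (V (fun ω => min (ζ ω) (τ1 ω))) =ᵐ[μ] s.indicator (V ζ) :=
      V_loc hφc hφInt hV (T0_min hζ0 hτ1) hζ0 hζleτ1_on_s hsζτ1 hsζ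
    have locm2 : sᶜ.indicator (V (fun ω => min (ζ ω) (τ2 ω))) =ᵐ[μ] sᶜ.indicator (V ζ) :=
      V_loc hφc hφInt hV (T0_min hζ0 hτ2) hζ0 hζleτ2_on_sc hsζτ2.compl hsζ.compl
    -- integrability of the two pieces
    have hint1 : Integrable (s.indicator (V θm)) μ :=
      (hVτ1int.indicator (preMS_le_m hτ1.1.1 _ hsτ1)).congr
        ((indicator_congr_ae (EventuallyEq.refl _ _)).trans loc1.symm)
    have hint2 : Integrable (sᶜ.indicator (V θm)) μ :=
      (hVτ2int.indicator (preMS_le_m hτ2.1.1 _ hsτ2.compl)).congr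
        ((indicator_congr_ae (EventuallyEq.refl _ _)).trans loc2.symm)
    -- decompose the conditional expectation
    have hdecomp : μ[V θm|preMS 𝓕 ζ] =ᵐ[μ]
        μ[fun ω => s.indicator (V θm) ω + sᶜ.indicator (V θm) ω|preMS 𝓕 ζ] := by
      rw [indicator_compl_add]
    have hadd : μ[fun ω => s.indicator (V θm) ω + sᶜ.indicator (V θm) ω|preMS 𝓕 ζ] =ᵐ[μ]
        μ[s.indicator (V θm)|preMS 𝓕 ζ] + μ[sᶜ.indicator (V θm)|preMS 𝓕 ζ] :=
      condExp_add hint1 hint2 _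
    have piece1 : μ[s.indicator (V θm)|preMS 𝓕 ζ] =ᵐ[μ] s.indicator (V ζ) := by
      have p1 : μ[s.indicator (V θm)|preMS 𝓕 ζ] =ᵐ[μ] μ[s.indicator (V τ1)|preMS 𝓕 ζ] :=
        condExp_congr_ae loc1
      have p2 : μ[s.indicator (V τ1)|preMS 𝓕 ζ] =ᵐ[μ] s.indicator (μ[V τ1|preMS 𝓕 ζ]) :=
        condExp_indicator hVτ1int hsζ
      exact (p1.trans p2).trans ((indicator_congr_ae m1).trans locm1)
    have piece2 : μ[sᶜ.indicator (V θm)|preMS 𝓕 ζ] =ᵐ[μ] sᶜ.indicator (V ζ) := by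
      have p1 : μ[sᶜ.indicator (V θm)|preMS 𝓕 ζ] =ᵐ[μ] μ[sᶜ.indicator (V τ2)|preMS 𝓕 ζ] :=
        condExp_congr_ae loc2
      have p2 : μ[sᶜ.indicator (V τ2)|preMS 𝓕 ζ] =ᵐ[μ] sᶜ.indicator (μ[V τ2|preMS 𝓕 ζ]) :=
        condExp_indicator hVτ2int hsζ.compl
      exact (p1.trans p2).trans ((indicator_congr_ae m2).trans locm2)
    have hsum : μ[s.indicator (V θm)|preMS 𝓕 ζ] + μ[sᶜ.indicator (V θm)|preMS 𝓕 ζ] =ᵐ[μ]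
        V ζ := by
      filter_upwards [piece1, piece2] with ω e1 e2
      have : s.indicator (V ζ) ω + sᶜ.indicator (V ζ) ω = V ζ ω := by
        have := congrFun (indicator_compl_add s (V ζ)) ω
        simpa using this
      simp only [Pi.add_apply]
      rw [e1, e2, this]
    exact (hdecomp.trans hadd).trans hsum
  ---------------------------------------------------------------------------
  -- Step (†) : reduce to ζ and then partition by the relative position of ρ
  ---------------------------------------------------------------------------
  have t1 : μ[V θm|preMS 𝓕 ρ] =ᵐ[μ] μ[μ[V θm|preMS 𝓕 ζ]|preMS 𝓕 ρ] :=
    (condExp_condExp_of_le hle_ρ_ζ (preMS_le_m stζ)).symm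
  have t2 : μ[μ[V θm|preMS 𝓕 ζ]|preMS 𝓕 ρ] =ᵐ[μ] μ[V ζ|preMS 𝓕 ρ] :=
    condExp_congr_ae ddagger
  -- partition
  set R3 : Set Ω := {ω | τ1 ω < ρ ω} with hR3def
  set R2' : Set Ω := {ω | τ2 ω < ρ ω} with hR2'def
  set R2 : Set Ω := R2' ∩ R3ᶜ with hR2def
  set R1 : Set Ω := {ω | τ12 ω < ρ ω}ᶜ with hR1def
  have hR3min : MeasurableSet[preMS 𝓕 (fun ω => min (ρ ω) (τ1 ω))] R3 :=
    measurableSet_lt_min_preMS hρ.1 hτ1.1 (pos hρ) (pos hτ1)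
  have hR2'min : MeasurableSet[preMS 𝓕 (fun ω => min (ρ ω) (τ2 ω))] R2' :=
    measurableSet_lt_min_preMS hρ.1 hτ2.1 (pos hρ) (pos hτ2)
  have hR1min : MeasurableSet[preMS 𝓕 (fun ω => min (ρ ω) (τ12 ω))] R1 :=
    (measurableSet_lt_min_preMS hρ.1 hτ120.1 (pos hρ) (pos hτ120)).compl
  have stρτ1 : IsStoppingTime 𝓕 (fun ω => ((min (ρ ω) (τ1 ω) : ℝ) : WithTop ℝ)) := (T0_min hρ hτ1).1.1
  have stρτ2 : IsStoppingTime 𝓕 (fun ω => ((min (ρ ω) (τ2 ω) : ℝ) : WithTop ℝ)) := (T0_min hρ hτ2).1.1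
  have stρτ12 : IsStoppingTime 𝓕 (fun ω => ((min (ρ ω) (τ12 ω) : ℝ) : WithTop ℝ)) := (T0_min hρ hτ120).1.1
  have hR3ρ : MeasurableSet[preMS 𝓕 ρ] R3 :=
    preMS_mono stρτ1 (fun ω => min_le_left _ _) _ hR3min
  have hR2'ρ : MeasurableSet[preMS 𝓕 ρ] R2' :=
    preMS_mono stρτ2 (fun ω => min_le_left _ _) _ hR2'min
  have hR2ρ : MeasurableSet[preMS 𝓕 ρ] R2 := hR2'ρ.inter hR3ρ.compl
  have hR1ρ : MeasurableSet[preMS 𝓕 ρ] R1 :=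
    preMS_mono stρτ12 (fun ω => min_le_left _ _) _ hR1min
  -- transfers
  have hR3le : ∀ ω ∈ R3, ρ ω ≤ τ2 ω := by
    intro ω hω
    have h1 : τ1 ω < ρ ω := hω
    by_contra hc
    exact absurd (hρmax ω) (not_le.mpr (max_lt h1 (not_le.mp hc)))
  have hR3ρτ2 : MeasurableSet[preMS 𝓕 (fun ω => min (ρ ω) (τ2 ω))] R3 := by
    refine measurableSet_trace_transfer (η := ρ) (A := R2'ᶜ)
      (fun ω hω => (min_eq_left (not_lt.mp (by simpa [hR2'def] using hω))).symm)
      hR2'min.compl hR3ρ ?_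
    exact fun ω hω => not_lt.mpr (hR3le ω hω)
  have hR2ρτ1 : MeasurableSet[preMS 𝓕 (fun ω => min (ρ ω) (τ1 ω))] R2 := by
    refine measurableSet_trace_transfer (η := ρ) (A := R3ᶜ)
      (fun ω hω => (min_eq_left (not_lt.mp (by simpa [hR3def] using hω))).symm)
      hR3min.compl hR2ρ ?_
    exact fun ω hω => hω.2
  have hR1ρτ12 : MeasurableSet[preMS 𝓕 (fun ω => min (ρ ω) (τ12 ω))] R1 := hR1min
  have hR1τ12 : MeasurableSet[preMS 𝓕 τ12] R1 :=
    preMS_mono stρτ12 (fun ω => min_le_right _ _) _ hR1min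
  -- facts on the pieces
  have hR1le : ∀ ω ∈ R1, ρ ω ≤ τ12 ω := fun ω hω => not_lt.mp hω
  have hR2le : ∀ ω ∈ R2, ρ ω ≤ τ1 ω := fun ω hω => not_lt.mp hω.2
  -- localizations of V ζ on the pieces
  have locζ1 : R1.indicator (V ζ) =ᵐ[μ] R1.indicator (V τ12) := by
    refine V_loc hφc hφInt hV hζ0 hτ120 ?_ (hle_ρ_ζ _ hR1ρ) hR1τ12
    exact fun ω hω => max_eq_right (hR1le ω hω)
  have locζ2 : R2.indicator (V ζ) =ᵐ[μ]
      R2.indicator (V (fun ω => min (ρ ω) (τ1 ω))) := by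
    refine V_loc hφc hφInt hV hζ0 (T0_min hρ hτ1) ?_ (hle_ρ_ζ _ hR2ρ) hR2ρτ1
    intro ω hω
    have h2 : τ2 ω < ρ ω := hω.1
    have hτ12ρ : τ12 ω ≤ ρ ω := (min_le_right _ _).trans (le_of_lt h2)
    show max (ρ ω) (τ12 ω) = min (ρ ω) (τ1 ω)
    rw [max_eq_left hτ12ρ, min_eq_left (hR2le ω hω)]
  have locζ3 : R3.indicator (V ζ) =ᵐ[μ]
      R3.indicator (V (fun ω => min (ρ ω) (τ2 ω))) := by
    refine V_loc hφc hφInt hV hζ0 (T0_min hρ hτ2) ?_ (hle_ρ_ζ _ hR3ρ) hR3ρτ2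
    intro ω hω
    have h1 : τ1 ω < ρ ω := hω
    have hτ12ρ : τ12 ω ≤ ρ ω := (min_le_left _ _).trans (le_of_lt h1)
    show max (ρ ω) (τ12 ω) = min (ρ ω) (τ2 ω)
    rw [max_eq_left hτ12ρ, min_eq_left (hR3le ω hω)]
  -- integrability of stopped values at ρ ∧ τᵢ
  obtain ⟨hg1eq, hg1int⟩ := V_int_of_mart hM1 (T0_min hρ hτ1)
    (fun ω => le_min (hSρ ω) (hSτ1 ω)) (fun ω => min_le_right _ _)
  obtain ⟨hg2eq, hg2int⟩ := V_int_of_mart hM2 (T0_min hρ hτ2)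
    (fun ω => le_min (hSρ ω) (hSτ2 ω)) (fun ω => min_le_right _ _)
  -- m-measurability of the pieces
  have hR1m : MeasurableSet R1 := preMS_le_m stρ _ hR1ρ
  have hR2m : MeasurableSet R2 := preMS_le_m stρ _ hR2ρ
  have hR3m : MeasurableSet R3 := preMS_le_m stρ _ hR3ρ
  -- integrability of the pieces
  have hint1 : Integrable (R1.indicator (V ζ)) μ :=
    (hVτ12int.indicator hR1m).congr locζ1.symm
  have hint2 : Integrable (R2.indicator (V ζ)) μ :=
    (hg1int.indicator hR2m).congr locζ2.symm
  have hint3 : Integrable (R3.indicator (V ζ)) μ :=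
    (hg2int.indicator hR3m).congr locζ3.symm
  -- conditional expectations of the pieces
  have term1 : μ[R1.indicator (V ζ)|preMS 𝓕 ρ] =ᵐ[μ] R1.indicator (V ρ) := by
    have p1 : μ[R1.indicator (V ζ)|preMS 𝓕 ρ] =ᵐ[μ] μ[R1.indicator (V τ12)|preMS 𝓕 ρ] :=
      condExp_congr_ae locζ1
    have p2 : μ[R1.indicator (V τ12)|preMS 𝓕 ρ] =ᵐ[μ] R1.indicator (μ[V τ12|preMS 𝓕 ρ]) :=
      condExp_indicator hVτ12int hR1ρ
    have hζτ12max : (fun ω => min (ζ ω) (τ12 ω)) = τ12 :=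
      funext fun ω => min_eq_right (le_max_right _ _)
    have m12 : μ[V τ12|preMS 𝓕 ρ] =ᵐ[μ] V (fun ω => min (ρ ω) (τ12 ω)) := by
      have := martSys_stopped hφc hφInt hV hτ120 hSτ12 hM12 hρ hζ0 hSρ hρζ
      rwa [hζτ12max] at this
    have locback : R1.indicator (V (fun ω => min (ρ ω) (τ12 ω))) =ᵐ[μ] R1.indicator (V ρ) := by
      refine V_loc hφc hφInt hV (T0_min hρ hτ120) hρ ?_ hR1ρτ12 hR1ρ
      exact fun ω hω => min_eq_left (hR1le ω hω)
    exact (p1.trans p2).trans ((indicator_congr_ae m12).trans locback)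
  have term2 : μ[R2.indicator (V ζ)|preMS 𝓕 ρ] =ᵐ[μ] R2.indicator (V ρ) := by
    have p1 : μ[R2.indicator (V ζ)|preMS 𝓕 ρ] =ᵐ[μ]
        μ[R2.indicator (μ[V (fun ω => min (ρ ω) (τ1 ω))|preMS 𝓕 (fun ω => min (ρ ω) (τ1 ω))])|preMS 𝓕 ρ] :=
      condExp_congr_ae (locζ2.trans (indicator_congr_ae hg1eq))
    have hmeas : Measurable[preMS 𝓕 ρ]
        (R2.indicator (μ[V (fun ω => min (ρ ω) (τ1 ω))|preMS 𝓕 (fun ω => min (ρ ω) (τ1 ω))])) := by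
      have h0 : Measurable[preMS 𝓕 ρ]
          (μ[V (fun ω => min (ρ ω) (τ1 ω))|preMS 𝓕 (fun ω => min (ρ ω) (τ1 ω))]) :=
        (stronglyMeasurable_condExp (m := preMS 𝓕 (fun ω => min (ρ ω) (τ1 ω)))).measurable.mono
          (preMS_mono stρτ1 (fun ω => min_le_left _ _)) le_rfl
      exact h0.indicator hR2ρ
    have hintg : Integrable
        (R2.indicator (μ[V (fun ω => min (ρ ω) (τ1 ω))|preMS 𝓕 (fun ω => min (ρ ω) (τ1 ω))])) μ :=
      integrable_condExp.indicator hR2m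
    have p2 := condExp_of_stronglyMeasurable (preMS_le_m stρ) hmeas.stronglyMeasurable hintg
    have locback : R2.indicator (V (fun ω => min (ρ ω) (τ1 ω))) =ᵐ[μ] R2.indicator (V ρ) := by
      refine V_loc hφc hφInt hV (T0_min hρ hτ1) hρ ?_ hR2ρτ1 hR2ρ
      exact fun ω hω => min_eq_left (hR2le ω hω)
    refine (p1.trans ?_).trans ((indicator_congr_ae hg1eq.symm).trans locback)
    rw [p2]
  have term3 : μ[R3.indicator (V ζ)|preMS 𝓕 ρ] =ᵐ[μ] R3.indicator (V ρ) := by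
    have p1 : μ[R3.indicator (V ζ)|preMS 𝓕 ρ] =ᵐ[μ]
        μ[R3.indicator (μ[V (fun ω => min (ρ ω) (τ2 ω))|preMS 𝓕 (fun ω => min (ρ ω) (τ2 ω))])|preMS 𝓕 ρ] :=
      condExp_congr_ae (locζ3.trans (indicator_congr_ae hg2eq))
    have hmeas : Measurable[preMS 𝓕 ρ]
        (R3.indicator (μ[V (fun ω => min (ρ ω) (τ2 ω))|preMS 𝓕 (fun ω => min (ρ ω) (τ2 ω))])) := by
      have h0 : Measurable[preMS 𝓕 ρ]
          (μ[V (fun ω => min (ρ ω) (τ2 ω))|preMS 𝓕 (fun ω => min (ρ ω) (τ2 ω))]) :=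
        (stronglyMeasurable_condExp (m := preMS 𝓕 (fun ω => min (ρ ω) (τ2 ω)))).measurable.mono
          (preMS_mono stρτ2 (fun ω => min_le_left _ _)) le_rfl
      exact h0.indicator hR3ρ
    have hintg : Integrable
        (R3.indicator (μ[V (fun ω => min (ρ ω) (τ2 ω))|preMS 𝓕 (fun ω => min (ρ ω) (τ2 ω))])) μ :=
      integrable_condExp.indicator hR3m
    have p2 := condExp_of_stronglyMeasurable (preMS_le_m stρ) hmeas.stronglyMeasurable hintg
    have locback : R3.indicator (V (fun ω => min (ρ ω) (τ2 ω))) =ᵐ[μ] R3.indicator (V ρ) := by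
      refine V_loc hφc hφInt hV (T0_min hρ hτ2) hρ ?_ hR3ρτ2 hR3ρ
      exact fun ω hω => min_eq_left (hR3le ω hω)
    refine (p1.trans ?_).trans ((indicator_congr_ae hg2eq.symm).trans locback)
    rw [p2]
  -- cover property
  have hcover : ∀ ω, (ω ∈ R1 ∧ ω ∉ R2 ∧ ω ∉ R3) ∨ (ω ∈ R2 ∧ ω ∉ R1 ∧ ω ∉ R3) ∨
      (ω ∈ R3 ∧ ω ∉ R1 ∧ ω ∉ R2) := by
    intro ω
    by_cases h3 : τ1 ω < ρ ω
    · refine Or.inr (Or.inr ⟨h3, ?_, ?_⟩)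
      · intro hc
        exact hc ((min_le_left (τ1 ω) (τ2 ω)).trans_lt h3)
      · exact fun hc => hc.2 h3
    · by_cases h2 : τ2 ω < ρ ω
      · refine Or.inr (Or.inl ⟨⟨h2, h3⟩, ?_, h3⟩)
        intro hc
        exact hc ((min_le_right (τ1 ω) (τ2 ω)).trans_lt h2)
      · refine Or.inl ⟨?_, fun hc => h2 hc.1, h3⟩
        show ¬ τ12 ω < ρ ω
        exact not_lt.mpr (le_min (not_lt.mp h3) (not_lt.mp h2))
  -- assemble
  have e0 : μ[V ζ|preMS 𝓕 ρ] =ᵐ[μ]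
      μ[fun ω => R1.indicator (V ζ) ω + R2.indicator (V ζ) ω + R3.indicator (V ζ) ω|preMS 𝓕 ρ] := by
    rw [indicator_triple _ hcover]
  have e1 : μ[fun ω => R1.indicator (V ζ) ω + R2.indicator (V ζ) ω + R3.indicator (V ζ) ω|preMS 𝓕 ρ]
      =ᵐ[μ] μ[fun ω => R1.indicator (V ζ) ω + R2.indicator (V ζ) ω|preMS 𝓕 ρ] +
        μ[R3.indicator (V ζ)|preMS 𝓕 ρ] :=
    condExp_add (hint1.add hint2) hint3 _
  have e2 : μ[fun ω => R1.indicator (V ζ) ω + R2.indicator (V ζ) ω|preMS 𝓕 ρ] =ᵐ[μ]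
      μ[R1.indicator (V ζ)|preMS 𝓕 ρ] + μ[R2.indicator (V ζ)|preMS 𝓕 ρ] :=
    condExp_add hint1 hint2 _
  have efinal : μ[V ζ|preMS 𝓕 ρ] =ᵐ[μ] V ρ := by
    have hsum := congrFun (indicator_triple (V ρ) hcover)
    filter_upwards [e0, e1, e2, term1, term2, term3] with ω q0 q1 q2 s1 s2 s3
    rw [q0, q1, Pi.add_apply, q2, Pi.add_apply, s1, s2, s3]
    exact hsum ω
  exact (t1.trans t2).trans efinal

end Stmt16Aux
theorem stmt16 (μ : Measure Ω) [IsProbabilityMeasure μ] (𝓕 : Filtration ℝ m) (T : ℝ)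
    (φ : (Ω → ℝ) → Ω → ℝ) (hφ : Admissible 𝓕 μ T φ)
    (hφUI : UniformIntegrable (fun τ : T0 𝓕 T => φ τ.1) 1 μ)
    (V : (Ω → ℝ) → Ω → ℝ)
    (hV : ∀ σ ∈ T0 𝓕 T,
      IsEssSupFam μ (fun θ => μ[φ θ|preMS 𝓕 σ]) (TS 𝓕 T σ) (V σ))
    (S : Ω → ℝ) (hS : S ∈ T0 𝓕 T)
    (τ1 τ2 : Ω → ℝ)
    (h1 : τ1 ∈ TS 𝓕 T S ∧ MartSysOn 𝓕 μ T V S τ1)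
    (h2 : τ2 ∈ TS 𝓕 T S ∧ MartSysOn 𝓕 μ T V S τ2) :
    (fun ω => max (τ1 ω) (τ2 ω)) ∈ TS 𝓕 T S ∧
      MartSysOn 𝓕 μ T V S (fun ω => max (τ1 ω) (τ2 ω)) := by
  obtain ⟨⟨hτ1T0, hSτ1⟩, hM1⟩ := h1
  obtain ⟨⟨hτ2T0, hSτ2⟩, hM2⟩ := h2
  have hφInt : ∀ θ ∈ T0 𝓕 T, Integrable (φ θ) μ :=
    fun θ hθ => Stmt16Aux.integrable_phi hφUI hθ
  constructor
  · exact ⟨Stmt16Aux.T0_max hτ1T0 hτ2T0, fun ω => (hSτ1 ω).trans (le_max_left _ _)⟩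
  · intro σ hσ σ' hσ' hSσ hσσ' hσ'max
    have dagσ' : μ[V (fun ω => max (τ1 ω) (τ2 ω))|preMS 𝓕 σ'] =ᵐ[μ] V σ' :=
      Stmt16Aux.V_dagger hφ.consistent hφInt hV hτ1T0 hSτ1 hM1 hτ2T0 hSτ2 hM2 hσ'
        (fun ω => (hSσ ω).trans (hσσ' ω)) hσ'max
    have dagσ : μ[V (fun ω => max (τ1 ω) (τ2 ω))|preMS 𝓕 σ] =ᵐ[μ] V σ :=
      Stmt16Aux.V_dagger hφ.consistent hφInt hV hτ1T0 hSτ1 hM1 hτ2T0 hSτ2 hM2 hσ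
        hSσ (fun ω => (hσσ' ω).trans (hσ'max ω))
    have tt : μ[V σ'|preMS 𝓕 σ] =ᵐ[μ]
        μ[μ[V (fun ω => max (τ1 ω) (τ2 ω))|preMS 𝓕 σ']|preMS 𝓕 σ] :=
      condExp_congr_ae dagσ'.symm
    have tower : μ[μ[V (fun ω => max (τ1 ω) (τ2 ω))|preMS 𝓕 σ']|preMS 𝓕 σ] =ᵐ[μ]
        μ[V (fun ω => max (τ1 ω) (τ2 ω))|preMS 𝓕 σ] :=
      condExp_condExp_of_le (Stmt16Aux.preMS_mono hσ.1.1 hσσ') (Stmt16Aux.preMS_le_m hσ'.1.1)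
    exact (tt.trans tower).trans dagσ
end
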